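/- Let G be a graph, X ⊆ V(G), and P ⊆ X. Let cc(P, G[X]) be the number of connected components of G[X] containing no vertex of P. Then the number of consistent cuts (X_l, X_r) of X in G[X] with P ⊆ X_l equals 2^{cc(P, G[X])}. -/

import Mathlib

/-- The number of consistent cuts `(X_l, X_r)` of `X` in `G[X]` with `P ⊆ X_l`
equals `2 ^ cc(P, G[X])`, where `cc(P, G[X])` is the number of connected
components of `G[X]` containing no vertex of `P`. -/
theorem stmt5 {V : Type*} [Fintype V] (G : SimpleGraph V) (X P : Set V) (hP : P ⊆ X) :
    Nat.card {p : Set V × Set V //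
        p.1 ∩ p.2 = ∅ ∧ p.1 ∪ p.2 = X ∧ P ⊆ p.1 ∧
        ∀ u ∈ p.1, ∀ v ∈ p.2, ¬ G.Adj u v} =
      2 ^ {c : (G.induce X).ConnectedComponent |
        ∀ v : X, (G.induce X).connectedComponentMk v = c → (v : V) ∉ P}.ncard := by
  classical
  set G' := G.induce X with hG'
  set S : Set G'.ConnectedComponent :=
    {c : G'.ConnectedComponent | ∀ v : X, G'.connectedComponentMk v = c → (v : V) ∉ P}
    with hS
  -- vertices in the same component are on the same side of a consistent cut
  have same_side : ∀ (p : Set V × Set V), p.1 ∩ p.2 = ∅ → p.1 ∪ p.2 = X →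
      (∀ u ∈ p.1, ∀ v ∈ p.2, ¬ G.Adj u v) →
      ∀ u v : X, G'.Reachable u v → ((u : V) ∈ p.2 ↔ (v : V) ∈ p.2) := by
    intro p hdisj hunion hcons u v hr
    obtain ⟨w⟩ := hr
    induction w with
    | nil => rfl
    | cons h _ ih =>
      rename_i a b c w
      have hadj : G.Adj (a : V) (b : V) := h
      have key : ((a : V) ∈ p.2 ↔ (b : V) ∈ p.2) := by
        have ha : (a : V) ∈ p.1 ∪ p.2 := by rw [hunion]; exact a.2
        have hb : (b : V) ∈ p.1 ∪ p.2 := by rw [hunion]; exact b.2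
        constructor
        · intro h2
          rcases hb with hb | hb
          · exact absurd hadj.symm (hcons _ hb _ h2)
          · exact hb
        · intro h2
          rcases ha with ha | ha
          · exact absurd hadj (hcons _ ha _ h2)
          · exact ha
      exact key.trans ih
  have e : {p : Set V × Set V //
        p.1 ∩ p.2 = ∅ ∧ p.1 ∪ p.2 = X ∧ P ⊆ p.1 ∧
        ∀ u ∈ p.1, ∀ v ∈ p.2, ¬ G.Adj u v} ≃ Set S := by
    refine ⟨fun p => {c : S | ∃ v : X, G'.connectedComponentMk v = (c : G'.ConnectedComponent)
        ∧ (v : V) ∈ p.1.2},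
      fun T => ⟨(X \ {v : V | ∃ hx : v ∈ X, ∃ hS' : G'.connectedComponentMk ⟨v, hx⟩ ∈ S,
          (⟨G'.connectedComponentMk ⟨v, hx⟩, hS'⟩ : S) ∈ T},
        {v : V | ∃ hx : v ∈ X, ∃ hS' : G'.connectedComponentMk ⟨v, hx⟩ ∈ S,
          (⟨G'.connectedComponentMk ⟨v, hx⟩, hS'⟩ : S) ∈ T}), ?_, ?_, ?_, ?_⟩, ?_, ?_⟩
    · ext v; simp only [Set.mem_inter_iff, Set.mem_diff]; tauto
    · ext v
      simp only [Set.mem_union, Set.mem_diff]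
      constructor
      · rintro (⟨h, _⟩ | ⟨h, _⟩) <;> exact h
      · intro hv
        by_cases h : v ∈ {v : V | ∃ hx : v ∈ X, ∃ hS' : G'.connectedComponentMk ⟨v, hx⟩ ∈ S,
            (⟨G'.connectedComponentMk ⟨v, hx⟩, hS'⟩ : S) ∈ T}
        · exact Or.inr h
        · exact Or.inl ⟨hv, h⟩
    · intro v hv
      refine ⟨hP hv, ?_⟩
      rintro ⟨hx, hS', -⟩
      exact hS' ⟨v, hx⟩ rfl hv
    · rintro u ⟨hu, hnu⟩ v ⟨hv, hS', hT⟩ hadj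
      apply hnu
      have hcomp : G'.connectedComponentMk ⟨u, hu⟩ = G'.connectedComponentMk ⟨v, hv⟩ :=
        SimpleGraph.ConnectedComponent.eq.2 (SimpleGraph.Adj.reachable (by exact hadj))
      refine ⟨hu, hcomp ▸ hS', ?_⟩
      convert hT using 2
    · rintro ⟨p, hdisj, hunion, hPl, hcons⟩
      have hp2X : p.2 ⊆ X := by rw [← hunion]; exact Set.subset_union_right
      have hp2 : {v : V | ∃ hx : v ∈ X, ∃ hS' : G'.connectedComponentMk ⟨v, hx⟩ ∈ S,
          (⟨G'.connectedComponentMk ⟨v, hx⟩, hS'⟩ : S) ∈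
            {c : S | ∃ w : X, G'.connectedComponentMk w = (c : G'.ConnectedComponent)
              ∧ (w : V) ∈ p.2}} = p.2 := by
        ext v
        constructor
        · rintro ⟨hx, hS', w, hw, hw2⟩
          have hr : G'.Reachable w ⟨v, hx⟩ := SimpleGraph.ConnectedComponent.eq.1 hw
          exact (same_side p hdisj hunion hcons _ _ hr).1 hw2
        · intro hv
          have hx : v ∈ X := hp2X hv
          have hS' : G'.connectedComponentMk ⟨v, hx⟩ ∈ S := by
            intro w hw hwP
            have hr : G'.Reachable w ⟨v, hx⟩ := SimpleGraph.ConnectedComponent.eq.1 hw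
            have hw2 : (w : V) ∈ p.2 := (same_side p hdisj hunion hcons _ _ hr).2 hv
            have hw1 : (w : V) ∈ p.1 := hPl hwP
            have : (w : V) ∈ p.1 ∩ p.2 := ⟨hw1, hw2⟩
            rw [hdisj] at this; exact this
          exact ⟨hx, hS', ⟨⟨v, hx⟩, rfl, hv⟩⟩
      have hp1 : X \ p.2 = p.1 := by
        ext v
        constructor
        · rintro ⟨hv, hnv⟩
          rw [← hunion] at hv
          rcases hv with h | h
          · exact h
          · exact absurd h hnv
        · intro hv
          refine ⟨by rw [← hunion]; exact Or.inl hv, fun h2 => ?_⟩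
          have : v ∈ p.1 ∩ p.2 := ⟨hv, h2⟩
          rw [hdisj] at this; exact this
      apply Subtype.ext
      simp only
      rw [hp2, hp1]
    · intro T
      ext c
      simp only [Set.mem_setOf_eq]
      constructor
      · rintro ⟨v, hv, hx, hS', hT⟩
        have : (⟨G'.connectedComponentMk ⟨(v : V), hx⟩, hS'⟩ : S) = c := by
          apply Subtype.ext
          simpa using hv
        rwa [this] at hT
      · intro hc
        obtain ⟨v, hv⟩ := (c : G'.ConnectedComponent).exists_rep
        refine ⟨v, hv, v.2, ?_, ?_⟩
        · show G'.connectedComponentMk v ∈ S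
          have hv' : G'.connectedComponentMk v = ↑c := hv
          rw [hv']; exact c.2
        · convert hc using 1
          apply Subtype.ext
          exact hv
  rw [Nat.card_congr e]
  haveI : Finite X := Subtype.finite
  haveI : Fintype G'.ConnectedComponent := Fintype.ofFinite _
  haveI : Fintype S := Fintype.ofFinite _
  rw [Nat.card_eq_fintype_card, Fintype.card_set, ← Nat.card_coe_set_eq,
    Nat.card_eq_fintype_card]
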